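/- arXiv:2505.20628 — 4 statements merged into one kernel-verified Lean document; each statement's English description precedes it below -/
import Mathlib

section
/- Fix ε ∈ (0,1). If (x,y) ∈ D is feasible and f(x,y) = √(1−ε²), then x = arcsin ε and y = 0; that is, (arcsin ε, 0) is the unique global constrained minimizer of f subject to g ≤ ε over D. -/
open Real

/-- For `f(x,y) = (1+y²)·cos x` and `g(x,y) = (1+y²)·sin x` on
`D = [0,π/2] × ℝ` with `ε ∈ (0,1)`: any feasible point of `D` whose objective
value equals `√(1-ε²)` must be `(arcsin ε, 0)`; i.e. `(arcsin ε, 0)` is the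
unique global constrained minimizer of `f` subject to `g ≤ ε`. -/
theorem concave2d_unique_min (ε : ℝ) (hε : ε ∈ Set.Ioo (0:ℝ) 1)
    (x y : ℝ) (hx : x ∈ Set.Icc 0 (π / 2))
    (hfeas : (1 + y ^ 2) * sin x ≤ ε)
    (hval : (1 + y ^ 2) * cos x = Real.sqrt (1 - ε ^ 2)) :
    x = arcsin ε ∧ y = 0 := by
  obtain ⟨hε0, hε1⟩ := hε
  obtain ⟨hx0, hx2⟩ := hx
  have hπ : x ≤ π := hx2.trans (by linarith [pi_pos])
  have hs : 0 ≤ sin x := sin_nonneg_of_nonneg_of_le_pi hx0 hπ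
  have hc : 0 ≤ cos x := cos_nonneg_of_mem_Icc ⟨by linarith [pi_pos], hx2⟩
  have h1mε : (0:ℝ) ≤ 1 - ε ^ 2 := by nlinarith
  have ht : (1:ℝ) ≤ 1 + y ^ 2 := by nlinarith [sq_nonneg y]
  have hsq : ((1 + y ^ 2) * cos x) ^ 2 = 1 - ε ^ 2 := by
    rw [hval, sq_sqrt h1mε]
  have hsin2 : ((1 + y ^ 2) * sin x) ^ 2 ≤ ε ^ 2 := by
    have h0 : 0 ≤ (1 + y ^ 2) * sin x := by positivity
    nlinarith
  have hpyth : sin x ^ 2 + cos x ^ 2 = 1 := sin_sq_add_cos_sq x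
  -- t² ≤ 1, so t = 1
  have hy : y = 0 := by nlinarith [sq_nonneg y, sq_nonneg (y^2)]
  subst hy
  have hcos : cos x = Real.sqrt (1 - ε ^ 2) := by simpa using hval
  have hsinx : sin x = ε := by
    have h2 : sin x ^ 2 = ε ^ 2 := by
      have := sq_sqrt h1mε
      nlinarith
    nlinarith
  refine ⟨?_, rfl⟩
  rw [← hsinx, arcsin_sin (by linarith [pi_pos]) (by linarith [pi_pos])]
end

section
/- For every c with 0 ≤ c < 1, the minimum of the penalized objective P_c over D = [0,π/2] × ℝ equals c and is attained at (π/2, 0): for all (x,y) ∈ D, P_c(x,y) ≥ c = P_c(π/2, 0). Moreover, for ε ∈ (0,1) the point (π/2, 0) is infeasible: g(π/2, 0) = 1 > ε, while f(π/2, 0) = 0. -/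
open Real

/-- For `0 ≤ c < 1`, the minimum of `P_c(x,y) = (1+y²)·(cos x + c·sin x)`
over `D = [0,π/2] × ℝ` equals `c`, attained at `(π/2,0)`; moreover for
`ε ∈ (0,1)` the point `(π/2,0)` is infeasible: `g(π/2,0) = 1 > ε`, while
`f(π/2,0) = 0`. -/
theorem penalized_small_coeff (c : ℝ) (hc0 : 0 ≤ c) (hc1 : c < 1)
    (ε : ℝ) (hε : ε ∈ Set.Ioo (0:ℝ) 1) :
    (∀ x y : ℝ, x ∈ Set.Icc 0 (π / 2) →
      c ≤ (1 + y ^ 2) * (cos x + c * sin x)) ∧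
    (1 + (0:ℝ) ^ 2) * (cos (π / 2) + c * sin (π / 2)) = c ∧
    (1 + (0:ℝ) ^ 2) * sin (π / 2) = 1 ∧ ε < 1 ∧
    (1 + (0:ℝ) ^ 2) * cos (π / 2) = 0 := by
  refine ⟨?_, by simp, by simp, hε.2, by simp⟩
  intro x y hx
  have hs0 : 0 ≤ sin x := sin_nonneg_of_nonneg_of_le_pi hx.1
    (hx.2.trans (by linarith [pi_pos]))
  have hs1 : sin x ≤ 1 := sin_le_one x
  have hc : 0 ≤ cos x := cos_nonneg_of_mem_Icc ⟨by linarith [hx.1, pi_pos], hx.2⟩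
  have hsc : sin x ^ 2 + cos x ^ 2 = 1 := sin_sq_add_cos_sq x
  have h2 : 1 - sin x ≤ cos x := by
    nlinarith [mul_nonneg hs0 (by linarith : (0:ℝ) ≤ 1 - sin x), mul_nonneg hc hc]
  have h3 : c * (1 - sin x) ≤ 1 - sin x :=
    mul_le_of_le_one_left (by linarith) hc1.le
  have key : c ≤ cos x + c * sin x := by nlinarith
  nlinarith [sq_nonneg y, key]
end

section
/- Fix ε ∈ (0,1). For every c ≥ 0, every global minimizer (x*,y*) of the penalized objective P_c over D = [0,π/2] × ℝ either is infeasible, i.e., g(x*,y*) ≥ 1 > ε, or satisfies f(x*,y*) = 1 > √(1−ε²). In particular, no choice of penalty coefficient c ≥ 0 makes a global minimizer of P_c coincide with a constrained minimizer of f subject to g ≤ ε, whose objective value is √(1−ε²). -/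
open Real

/-- **Failure of the penalized approach.** Fix `ε ∈ (0,1)`. For every `c ≥ 0`,
every global minimizer `(x*,y*)` of `P_c(x,y) = (1+y²)·(cos x + c·sin x)` over
`D = [0,π/2] × ℝ` either is infeasible, with `g(x*,y*) ≥ 1 > ε`, or satisfies
`f(x*,y*) = 1 > √(1-ε²)`; in particular it never coincides with a constrained
minimizer of `f` subject to `g ≤ ε`, whose objective value is `√(1-ε²)`. -/
theorem penalized_failure (ε : ℝ) (hε : ε ∈ Set.Ioo (0:ℝ) 1)
    (c : ℝ) (hc : 0 ≤ c)
    (xstar ystar : ℝ) (hx : xstar ∈ Set.Icc 0 (π / 2))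
    (hmin : ∀ x y : ℝ, x ∈ Set.Icc 0 (π / 2) →
      (1 + ystar ^ 2) * (cos xstar + c * sin xstar) ≤
        (1 + y ^ 2) * (cos x + c * sin x)) :
    ((1 + ystar ^ 2) * sin xstar ≥ 1 ∧ 1 > ε) ∨
    ((1 + ystar ^ 2) * cos xstar = 1 ∧ 1 > Real.sqrt (1 - ε ^ 2)) := by
  obtain ⟨hx0, hx2⟩ := hx
  have hε0 := hε.1
  have hε1 := hε.2
  have hpi : 0 < π := Real.pi_pos
  have hs : 0 ≤ sin xstar := Real.sin_nonneg_of_nonneg_of_le_pi hx0 (by linarith)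
  have hco : 0 ≤ cos xstar := Real.cos_nonneg_of_mem_Icc ⟨by linarith, hx2⟩
  have hs1 : sin xstar ≤ 1 := Real.sin_le_one xstar
  have hc1 : cos xstar ≤ 1 := Real.cos_le_one xstar
  have hpyth := Real.sin_sq_add_cos_sq xstar
  have hsum : 1 ≤ cos xstar + sin xstar := by nlinarith
  have hy2 : (0:ℝ) ≤ ystar ^ 2 := sq_nonneg _
  have hsqrt : Real.sqrt (1 - ε ^ 2) < 1 := by
    have h0 : (0:ℝ) ≤ 1 - ε ^ 2 := by nlinarith
    nlinarith [Real.sq_sqrt h0, Real.sqrt_nonneg (1 - ε ^ 2)]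
  rcases lt_or_ge c 1 with hcl | hcg
  · -- c < 1 : compare with (π/2, 0)
    have h1 := hmin (π/2) 0 ⟨by linarith, le_refl _⟩
    simp [Real.cos_pi_div_two, Real.sin_pi_div_two] at h1
    clear hmin
    -- h1 : (1+y²)(cos + c sin) ≤ c ; deduce cos xstar = 0
    have hpos : 0 ≤ cos xstar + c * sin xstar :=
      add_nonneg hco (mul_nonneg hc hs)
    have hco0 : cos xstar = 0 := by
      nlinarith [mul_nonneg hy2 hpos,
        mul_nonneg hc (by linarith : (0:ℝ) ≤ cos xstar + sin xstar - 1),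
        mul_nonneg (by linarith : (0:ℝ) ≤ 1 - c) hco]
    have hsin1 : sin xstar = 1 := by
      nlinarith [mul_nonneg hs (by linarith : (0:ℝ) ≤ 1 - sin xstar)]
    left
    refine ⟨?_, hε1⟩
    rw [hsin1]; nlinarith
  · -- c ≥ 1 : compare with (0, 0)
    have h1 := hmin 0 0 ⟨le_refl _, by linarith⟩
    simp [Real.cos_zero, Real.sin_zero] at h1
    clear hmin
    have h5 : sin xstar ≤ c * sin xstar := le_mul_of_one_le_left hs hcg
    have hkey : 1 ≤ cos xstar + c * sin xstar := by linarith
    have h6 : (1 + ystar ^ 2) * 1 ≤ (1 + ystar ^ 2) * (cos xstar + c * sin xstar) :=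
      mul_le_mul_of_nonneg_left hkey (by linarith)
    have hy0 : ystar ^ 2 = 0 := by nlinarith
    rw [hy0] at h1
    norm_num at h1
    clear h6
    have hsumeq : cos xstar + sin xstar = 1 := by linarith
    have hprod : sin xstar * cos xstar = 0 := by
      linear_combination ((cos xstar + sin xstar + 1) / 2) * hsumeq - (1/2) * hpyth
    rcases mul_eq_zero.mp hprod with hz | hz
    · -- sin = 0, cos = 1
      have hco1 : cos xstar = 1 := by linarith
      right
      refine ⟨?_, hsqrt⟩
      rw [hy0, hco1]; norm_num
    · -- cos = 0, sin = 1
      have hsin1 : sin xstar = 1 := by linarith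
      left
      refine ⟨?_, hε1⟩
      rw [hy0, hsin1]; norm_num
end

section
/- Fix ε ∈ (0,1). For every c ≥ 0 — including the optimal Lagrange multiplier value c = ε/√(1−ε²) — the constrained minimizer (arcsin ε, 0) is not a global minimizer of the penalized objective P_c over D = [0,π/2] × ℝ: there exists (x,y) ∈ D with P_c(x,y) < P_c(arcsin ε, 0). -/
open Real

/-- Fix `ε ∈ (0,1)`. For every `c ≥ 0`—including the optimal multiplier
`c = ε/√(1-ε²)`—the constrained minimizer `(arcsin ε, 0)` is not a global
minimizer of `P_c(x,y) = (1+y²)·(cos x + c·sin x)` over `D = [0,π/2] × ℝ`: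
some point of `D` has strictly smaller penalized objective value. -/
theorem penalized_misses_constrained_min (ε : ℝ) (hε : ε ∈ Set.Ioo (0:ℝ) 1)
    (c : ℝ) (hc : 0 ≤ c) :
    ∃ x y : ℝ, x ∈ Set.Icc 0 (π / 2) ∧
      (1 + y ^ 2) * (cos x + c * sin x) <
        (1 + (0:ℝ) ^ 2) * (cos (arcsin ε) + c * sin (arcsin ε)) := by
  obtain ⟨h0, h1⟩ := hε
  have hsin : sin (arcsin ε) = ε := Real.sin_arcsin (by linarith) (by linarith)
  have hcos : cos (arcsin ε) = Real.sqrt (1 - ε ^ 2) := by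
    rw [Real.cos_arcsin]
  have hsq : Real.sqrt (1 - ε ^ 2) ^ 2 = 1 - ε ^ 2 :=
    Real.sq_sqrt (by nlinarith)
  have hgt : 1 - ε < Real.sqrt (1 - ε ^ 2) := by
    nlinarith [Real.sqrt_nonneg (1 - ε ^ 2)]
  rcases le_or_gt c 1 with h | h
  · refine ⟨π / 2, 0, ⟨by positivity, le_refl _⟩, ?_⟩
    rw [Real.cos_pi_div_two, Real.sin_pi_div_two, hsin, hcos]
    nlinarith
  · refine ⟨0, 0, ⟨le_refl _, by positivity⟩, ?_⟩
    rw [Real.cos_zero, Real.sin_zero, hsin, hcos]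
    nlinarith
end
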